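/- Let su(2) denote the real Lie algebra of 2×2 complex matrices x with xᴴ = −x and trace x = 0, with Killing form κ, and let g̃ = su(2) × su(2) with the real symmetric bilinear form B((x,y),(x',y')) = −κ(x,x') + κ(y,y'). Then there is no involutive Lie algebra automorphism θ of g̃ (θ ∘ θ = id) such that (v,w) ↦ B(v, θ(w)) is positive definite on g̃, and likewise there is no involutive Lie algebra automorphism θ of g̃ such that (v,w) ↦ −B(v, θ(w)) is positive definite on g̃. -/

import Mathlib

/-- The product of two Lie rings is a Lie ring, with componentwise bracket. -/
instance prodLieRing (L₁ L₂ : Type*) [LieRing L₁] [LieRing L₂] : LieRing (L₁ × L₂) :=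
  { (inferInstance : AddCommGroup (L₁ × L₂)) with
    bracket := fun x y => (⁅x.1, y.1⁆, ⁅x.2, y.2⁆)
    add_lie := fun x y z => by
      show (⁅(x + y).1, z.1⁆, ⁅(x + y).2, z.2⁆)
        = (⁅x.1, z.1⁆, ⁅x.2, z.2⁆) + (⁅y.1, z.1⁆, ⁅y.2, z.2⁆)
      simp [add_lie]
    lie_add := fun x y z => by
      show (⁅x.1, (y + z).1⁆, ⁅x.2, (y + z).2⁆)
        = (⁅x.1, y.1⁆, ⁅x.2, y.2⁆) + (⁅x.1, z.1⁆, ⁅x.2, z.2⁆)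
      simp [lie_add]
    lie_self := fun x => by
      show (⁅x.1, x.1⁆, ⁅x.2, x.2⁆) = 0
      simp
    leibniz_lie := fun x y z => by
      show (⁅x.1, ⁅y.1, z.1⁆⁆, ⁅x.2, ⁅y.2, z.2⁆⁆)
        = (⁅⁅x.1, y.1⁆, z.1⁆, ⁅⁅x.2, y.2⁆, z.2⁆) + (⁅y.1, ⁅x.1, z.1⁆⁆, ⁅y.2, ⁅x.2, z.2⁆⁆)
      simp }

/-- The product of two real Lie algebras is a real Lie algebra. -/
instance prodLieAlgebra (L₁ L₂ : Type*) [LieRing L₁] [LieRing L₂]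
    [LieAlgebra ℝ L₁] [LieAlgebra ℝ L₂] : LieAlgebra ℝ (L₁ × L₂) :=
  { (inferInstance : Module ℝ (L₁ × L₂)) with
    lie_smul := fun t x y => by
      show (⁅x.1, (t • y).1⁆, ⁅x.2, (t • y).2⁆) = t • (⁅x.1, y.1⁆, ⁅x.2, y.2⁆)
      simp }

attribute [local instance 100] LieRing.ofAssociativeRing

/-- The real Lie algebra `su(2)` of traceless skew-Hermitian `2 × 2` complex matrices. -/
def su2 : LieSubalgebra ℝ (Matrix (Fin 2) (Fin 2) ℂ) where
  carrier := {x | x.conjTranspose = -x ∧ x.trace = 0}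
  zero_mem' := by constructor <;> simp
  add_mem' := by
    rintro a b ⟨ha1, ha2⟩ ⟨hb1, hb2⟩
    constructor
    · rw [Matrix.conjTranspose_add, ha1, hb1, neg_add]
    · rw [Matrix.trace_add, ha2, hb2, add_zero]
  smul_mem' := by
    rintro c a ⟨ha1, ha2⟩
    constructor
    · show ((c : ℂ) • a).conjTranspose = -((c : ℂ) • a)
      rw [Matrix.conjTranspose_smul, ha1]
      simp [Complex.star_def]
    · show ((c : ℂ) • a).trace = 0
      rw [Matrix.trace_smul, ha2, smul_zero]
  lie_mem' := by
    rintro a b ⟨ha1, ha2⟩ ⟨hb1, hb2⟩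
    constructor
    · show ⁅a, b⁆.conjTranspose = -⁅a, b⁆
      rw [Ring.lie_def, Matrix.conjTranspose_sub, Matrix.conjTranspose_mul,
        Matrix.conjTranspose_mul, ha1, hb1]
      simp only [Matrix.neg_mul, Matrix.mul_neg, neg_neg, neg_sub]
    · show ⁅a, b⁆.trace = 0
      rw [Ring.lie_def, Matrix.trace_sub, Matrix.trace_mul_comm, sub_self]

/-- The bilinear form `B((x,y),(x',y')) = -κ(x,x') + κ(y,y')` of signature `(3,3)` on
`su(2) × su(2)`, where `κ` is the Killing form of `su(2)`. -/
noncomputable def Bform (v w : ↥su2 × ↥su2) : ℝ :=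
  -(killingForm ℝ ↥su2 v.1 w.1) + killingForm ℝ ↥su2 v.2 w.2
open Matrix Complex in
def Ee : Fin 3 → Matrix (Fin 2) (Fin 2) ℂ
  | 0 => !![Complex.I, 0; 0, -Complex.I]
  | 1 => !![0, 1; -1, 0]
  | 2 => !![0, Complex.I; Complex.I, 0]

lemma mem_su2 {x : Matrix (Fin 2) (Fin 2) ℂ} : x ∈ su2 ↔ x.conjTranspose = -x ∧ x.trace = 0 :=
  Iff.rfl

lemma Ee_mem (i : Fin 3) : Ee i ∈ su2 := by
  rw [mem_su2]
  fin_cases i <;>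
    constructor <;>
      simp [Ee, Matrix.trace_fin_two, ← Matrix.ext_iff, Matrix.conjTranspose_apply,
        Fin.forall_fin_two]

noncomputable def ee (i : Fin 3) : ↥su2 := ⟨Ee i, Ee_mem i⟩

lemma lie_mat (a b : Matrix (Fin 2) (Fin 2) ℂ) : ⁅a, b⁆ = a * b - b * a := Ring.lie_def a b

lemma bracket01 : ⁅ee 0, ee 1⁆ = (2:ℝ) • ee 2 := by
  apply Subtype.ext
  show ⁅Ee 0, Ee 1⁆ = (2:ℝ) • Ee 2
  rw [lie_mat]
  ext i j
  fin_cases i <;> fin_cases j <;>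
    simp [Ee, Matrix.mul_apply, Fin.sum_univ_two] <;> ring
lemma bracket12 : ⁅ee 1, ee 2⁆ = (2:ℝ) • ee 0 := by
  apply Subtype.ext
  show ⁅Ee 1, Ee 2⁆ = (2:ℝ) • Ee 0
  rw [lie_mat]; ext i j
  fin_cases i <;> fin_cases j <;>
    simp [Ee, Matrix.mul_apply, Fin.sum_univ_two] <;> ring

lemma bracket20 : ⁅ee 2, ee 0⁆ = (2:ℝ) • ee 1 := by
  apply Subtype.ext
  show ⁅Ee 2, Ee 0⁆ = (2:ℝ) • Ee 1
  rw [lie_mat]; ext i j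
  fin_cases i <;> fin_cases j <;>
    simp [Ee, Matrix.mul_apply, Fin.sum_univ_two] <;> ring

lemma decomp (x : ↥su2) :
    x = ((x : Matrix (Fin 2) (Fin 2) ℂ) 0 0).im • ee 0
      + ((x : Matrix (Fin 2) (Fin 2) ℂ) 0 1).re • ee 1
      + ((x : Matrix (Fin 2) (Fin 2) ℂ) 0 1).im • ee 2 := by
  obtain ⟨h1, h2⟩ := x.2
  apply Subtype.ext
  have f1 : star ((x : Matrix (Fin 2) (Fin 2) ℂ) 0 0) = - (x : Matrix (Fin 2) (Fin 2) ℂ) 0 0 := by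
    simpa [Matrix.conjTranspose_apply] using congrFun (congrFun h1 0) 0
  have f2 : star ((x : Matrix (Fin 2) (Fin 2) ℂ) 0 1) = - (x : Matrix (Fin 2) (Fin 2) ℂ) 1 0 := by
    simpa [Matrix.conjTranspose_apply] using congrFun (congrFun h1 1) 0
  have f3 : (x : Matrix (Fin 2) (Fin 2) ℂ) 0 0 + (x : Matrix (Fin 2) (Fin 2) ℂ) 1 1 = 0 := by
    simpa [Matrix.trace_fin_two] using h2
  have hco : ((((x : Matrix (Fin 2) (Fin 2) ℂ) 0 0).im • ee 0
      + ((x : Matrix (Fin 2) (Fin 2) ℂ) 0 1).re • ee 1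
      + ((x : Matrix (Fin 2) (Fin 2) ℂ) 0 1).im • ee 2 : ↥su2) : Matrix (Fin 2) (Fin 2) ℂ)
      = ((x : Matrix (Fin 2) (Fin 2) ℂ) 0 0).im • Ee 0
      + ((x : Matrix (Fin 2) (Fin 2) ℂ) 0 1).re • Ee 1
      + ((x : Matrix (Fin 2) (Fin 2) ℂ) 0 1).im • Ee 2 := rfl
  rw [hco]
  ext i j
  fin_cases i <;> fin_cases j <;>
    simp only [Matrix.add_apply, Matrix.smul_apply, Ee] <;>
    simp [Complex.ext_iff, Complex.real_smul] at f1 f2 f3 ⊢ <;>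
    obtain ⟨f21, f22⟩ := f2 <;> obtain ⟨f31, f32⟩ := f3 <;>
    (try constructor) <;> linarith
lemma bracket10 : ⁅ee 1, ee 0⁆ = (-2:ℝ) • ee 2 := by
  rw [← lie_skew, bracket01]; module

lemma bracket21 : ⁅ee 2, ee 1⁆ = (-2:ℝ) • ee 0 := by
  rw [← lie_skew, bracket12]; module

lemma bracket02 : ⁅ee 0, ee 2⁆ = (-2:ℝ) • ee 1 := by
  rw [← lie_skew, bracket20]; module

lemma ee_linearIndependent : LinearIndependent ℝ ee := by
  rw [Fintype.linearIndependent_iff]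
  intro g hg
  have h' : g 0 • Ee 0 + g 1 • Ee 1 + g 2 • Ee 2 = 0 := by
    have := congrArg Subtype.val hg
    simpa [Fin.sum_univ_three, ee] using this
  have h00 := congrFun (congrFun h' 0) 0
  have h01 := congrFun (congrFun h' 0) 1
  simp [Ee, Complex.ext_iff, Complex.real_smul] at h00 h01
  intro i
  fin_cases i
  · exact h00
  · exact h01.1
  · exact h01.2

lemma ee_span : ⊤ ≤ Submodule.span ℝ (Set.range ee) := by
  intro x _
  rw [decomp x]
  refine add_mem (add_mem ?_ ?_) ?_ <;>
    exact Submodule.smul_mem _ _ (Submodule.subset_span ⟨_, rfl⟩)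

noncomputable def Bsu2 : Module.Basis (Fin 3) ℝ ↥su2 := Module.Basis.mk ee_linearIndependent ee_span

lemma Bsu2_apply (i : Fin 3) : Bsu2 i = ee i := Module.Basis.mk_apply _ _ i

noncomputable instance : Module.Finite ℝ ↥su2 := Module.Finite.of_basis Bsu2

lemma repr_smul (c : ℝ) (m l : Fin 3) : Bsu2.repr (c • ee m) l = if m = l then c else 0 := by
  rw [← Bsu2_apply, map_smul]
  simp [Finsupp.single_apply, Bsu2.repr_self]

lemma repr_ee (m l : Fin 3) : Bsu2.repr (ee m) l = if m = l then 1 else 0 := by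
  rw [← Bsu2_apply]
  simp [Finsupp.single_apply, Bsu2.repr_self]

lemma killing_ee (i j : Fin 3) :
    killingForm ℝ ↥su2 (ee i) (ee j) = if i = j then -8 else 0 := by
  rw [killingForm_apply_apply, LinearMap.trace_eq_matrix_trace ℝ Bsu2,
    Matrix.trace_fin_three]
  simp only [LinearMap.toMatrix_apply, Bsu2_apply, LinearMap.comp_apply, LieAlgebra.ad_apply]
  fin_cases i <;> fin_cases j <;>
    simp [bracket01, bracket10, bracket12, bracket21, bracket20, bracket02,
      lie_smul, smul_smul, repr_smul, repr_ee] <;> norm_num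
lemma killing_self_neg (x : ↥su2) (hx : x ≠ 0) : killingForm ℝ ↥su2 x x < 0 := by
  have hd := decomp x
  set a := ((x : Matrix (Fin 2) (Fin 2) ℂ) 0 0).im with ha
  set b := ((x : Matrix (Fin 2) (Fin 2) ℂ) 0 1).re with hb
  set c := ((x : Matrix (Fin 2) (Fin 2) ℂ) 0 1).im with hc
  have habc : a ≠ 0 ∨ b ≠ 0 ∨ c ≠ 0 := by
    by_contra hcon
    push_neg at hcon
    obtain ⟨h1, h2, h3⟩ := hcon
    apply hx
    rw [hd, h1, h2, h3]
    simp
  rw [hd]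
  simp only [map_add, map_smul, LinearMap.add_apply, LinearMap.smul_apply, smul_eq_mul,
    killing_ee]
  norm_num [Fin.ext_iff]
  have hpos : 0 < a * a + b * b + c * c := by
    rcases habc with h | h | h <;>
      nlinarith [mul_self_nonneg a, mul_self_nonneg b, mul_self_nonneg c, mul_self_pos.mpr h]
  nlinarith

lemma su2_center (z : ↥su2) (hz : ∀ w : ↥su2, ⁅w, z⁆ = 0) : z = 0 := by
  have h0 : ⁅Ee 0, (z : Matrix (Fin 2) (Fin 2) ℂ)⁆ = 0 := by
    simpa [ee] using congrArg Subtype.val (hz (ee 0))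
  have h1 : ⁅Ee 1, (z : Matrix (Fin 2) (Fin 2) ℂ)⁆ = 0 := by
    simpa [ee] using congrArg Subtype.val (hz (ee 1))
  have htr : (z : Matrix (Fin 2) (Fin 2) ℂ) 0 0 + (z : Matrix (Fin 2) (Fin 2) ℂ) 1 1 = 0 := by
    simpa [Matrix.trace_fin_two] using z.2.2
  rw [lie_mat] at h0 h1
  have e001 := congrFun (congrFun h0 0) 1
  have e010 := congrFun (congrFun h0 1) 0
  have e101 := congrFun (congrFun h1 0) 1
  simp [Ee, Matrix.mul_apply, Matrix.vecMul, dotProduct, Fin.sum_univ_two, Complex.ext_iff] at e001 e010 e101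
  simp [Complex.ext_iff] at htr
  apply Subtype.ext
  show (z : Matrix (Fin 2) (Fin 2) ℂ) = 0
  ext i j
  fin_cases i <;> fin_cases j <;>
    simp [Complex.ext_iff] <;>
    constructor <;> linarith [e001.1, e001.2, e010.1, e010.2, e101.1, e101.2, htr.1, htr.2]

lemma ee2_ne_zero : ee 2 ≠ 0 := by
  intro h
  have := congrFun (congrFun (congrArg Subtype.val h) 0) 1
  simp [ee, Ee, Complex.ext_iff] at this
theorem case1 :
    ¬ ∃ θ : (↥su2 × ↥su2) →ₗ⁅ℝ⁆ (↥su2 × ↥su2),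
        (∀ v, θ (θ v) = v) ∧ ∀ v, v ≠ 0 → 0 < Bform v (θ v) := by
  rintro ⟨θ, hinv, hpos⟩
  -- the (1,1)-component map is injective
  have hfne : ∀ x : ↥su2, x ≠ 0 → (θ (x, 0)).1 ≠ 0 := by
    intro x hx h
    have hp := hpos (x, 0) (by simp [Prod.ext_iff, hx])
    have : Bform (x, 0) (θ (x, 0))
        = -(killingForm ℝ ↥su2 x (θ (x, 0)).1) + killingForm ℝ ↥su2 0 (θ (x, 0)).2 := rfl
    rw [this, h] at hp
    simp at hp
  let F : ↥su2 →ₗ[ℝ] ↥su2 :=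
    (LinearMap.fst ℝ ↥su2 ↥su2).comp
      ((θ : (↥su2 × ↥su2) →ₗ[ℝ] (↥su2 × ↥su2)).comp (LinearMap.inl ℝ ↥su2 ↥su2))
  have hF : ∀ x, F x = (θ (x, 0)).1 := fun x => rfl
  have hFinj : Function.Injective F := by
    rw [← LinearMap.ker_eq_bot]
    apply LinearMap.ker_eq_bot'.mpr
    intro x hxF
    by_contra hx
    exact hfne x hx (by rw [← hF]; exact hxF)
  have hFsurj : Function.Surjective F := (LinearMap.injective_iff_surjective).mp hFinj
  -- first components of images of the two factors commute
  have hlie : ∀ x y : ↥su2, ⁅(θ (x, 0)).1, (θ (0, y)).1⁆ = 0 := by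
    intro x y
    have h := θ.map_lie (x, 0) (0, y)
    have hz : ⁅((x : ↥su2), (0 : ↥su2)), ((0 : ↥su2), (y : ↥su2))⁆ = (0 : ↥su2 × ↥su2) := by
      show (⁅x, (0:↥su2)⁆, ⁅(0:↥su2), y⁆) = (0 : ↥su2 × ↥su2)
      rw [lie_zero, zero_lie]
      rfl
    rw [hz, map_zero θ] at h
    exact (congrArg Prod.fst h).symm
  -- hence the image of the second factor has zero first component
  have hh : ∀ y : ↥su2, (θ (0, y)).1 = 0 := by
    intro y
    apply su2_center
    intro w
    obtain ⟨x, hx⟩ := hFsurj w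
    rw [← hx, hF]
    exact hlie x y
  have hsplit : ∀ y : ↥su2, θ (0, y) = (0, (θ (0, y)).2) := by
    intro y
    exact Prod.ext_iff.mpr ⟨hh y, rfl⟩
  -- the second-component map k is an involution
  have hk2 : ∀ y : ↥su2, (θ (0, (θ (0, y)).2)).2 = y := by
    intro y
    have h := hinv (0, y)
    rw [hsplit y] at h
    exact congrArg Prod.snd h
  -- positivity for k
  have hkpos : ∀ y : ↥su2, y ≠ 0 → 0 < killingForm ℝ ↥su2 y (θ (0, y)).2 := by
    intro y hy
    have hp := hpos (0, y) (by simp [Prod.ext_iff, hy])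
    have : Bform (0, y) (θ (0, y))
        = -(killingForm ℝ ↥su2 0 (θ (0, y)).1) + killingForm ℝ ↥su2 y (θ (0, y)).2 := rfl
    rw [this] at hp
    simpa using hp
  -- k = -1
  have hky : ∀ y : ↥su2, (θ (0, y)).2 = -y := by
    intro y
    by_contra hne
    have hw0 : y + (θ (0, y)).2 ≠ 0 := fun h => hne (eq_neg_of_add_eq_zero_right h)
    have hkw : (θ (0, y + (θ (0, y)).2)).2 = y + (θ (0, y)).2 := by
      have hadd : ((0 : ↥su2), y + (θ (0, y)).2) = ((0 : ↥su2), y) + (0, (θ (0, y)).2) := by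
        simp
      rw [hadd, map_add θ]
      show (θ (0, y)).2 + (θ (0, (θ (0, y)).2)).2 = _
      rw [hk2 y, add_comm]
    have hp := hkpos _ hw0
    rw [hkw] at hp
    exact absurd hp (not_lt.mpr (le_of_lt (killing_self_neg _ hw0)))
  -- k preserves brackets
  have hkbr : ∀ y y' : ↥su2, (θ (0, ⁅y, y'⁆)).2 = ⁅(θ (0, y)).2, (θ (0, y')).2⁆ := by
    intro y y'
    have h := θ.map_lie (0, y) (0, y')
    have hz : ⁅((0 : ↥su2), y), ((0 : ↥su2), y')⁆ = ((0 : ↥su2), ⁅y, y'⁆) := by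
      show (⁅(0:↥su2), (0:↥su2)⁆, ⁅y, y'⁆) = _
      rw [zero_lie]
    rw [hz] at h
    exact congrArg Prod.snd h
  -- contradiction
  have hcon := hkbr (ee 0) (ee 1)
  rw [hky, hky (ee 0), hky (ee 1), neg_lie, lie_neg, neg_neg, bracket01] at hcon
  have h2 : (2:ℝ) • ee 2 + (2:ℝ) • ee 2 = 0 := eq_neg_iff_add_eq_zero.mp hcon.symm
  have h4 : ((2:ℝ) + 2) • ee 2 = 0 := by rw [add_smul]; exact h2
  exact ee2_ne_zero ((smul_eq_zero.mp h4).resolve_left (by norm_num))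
def swapHom : (↥su2 × ↥su2) →ₗ⁅ℝ⁆ (↥su2 × ↥su2) where
  toFun v := (v.2, v.1)
  map_add' := fun _ _ => rfl
  map_smul' := fun _ _ => rfl
  map_lie' := rfl

lemma swap_swap (u : ↥su2 × ↥su2) : swapHom (swapHom u) = u := rfl

lemma Bform_swap (v w : ↥su2 × ↥su2) : Bform (swapHom v) (swapHom w) = -Bform v w := by
  show -(killingForm ℝ ↥su2 v.2 w.2) + killingForm ℝ ↥su2 v.1 w.1
    = -(-(killingForm ℝ ↥su2 v.1 w.1) + killingForm ℝ ↥su2 v.2 w.2)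
  ring

theorem su2_prod_no_cartanInvolution' :
    (¬ ∃ θ : (↥su2 × ↥su2) →ₗ⁅ℝ⁆ (↥su2 × ↥su2),
        (∀ v, θ (θ v) = v) ∧ ∀ v, v ≠ 0 → 0 < Bform v (θ v)) ∧
    ¬ ∃ θ : (↥su2 × ↥su2) →ₗ⁅ℝ⁆ (↥su2 × ↥su2),
        (∀ v, θ (θ v) = v) ∧ ∀ v, v ≠ 0 → 0 < -Bform v (θ v) := by
  refine ⟨case1, ?_⟩
  rintro ⟨θ, hinv, hpos⟩
  apply case1
  refine ⟨swapHom.comp (θ.comp swapHom), fun v => ?_, fun v hv => ?_⟩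
  · show swapHom (θ (swapHom (swapHom (θ (swapHom v))))) = v
    rw [swap_swap, hinv (swapHom v)]
    exact swap_swap v
  · have hsv : swapHom v ≠ 0 := by
      intro h
      apply hv
      have := congrArg swapHom h
      rw [swap_swap] at this
      exact this
    have hp := hpos (swapHom v) hsv
    show 0 < Bform v (swapHom (θ (swapHom v)))
    have key := Bform_swap (swapHom v) (θ (swapHom v))
    rw [swap_swap] at key
    rw [key]
    exact hp

/-- On `su(2) × su(2)` with the form
`B((x,y),(x',y')) = -κ(x,x') + κ(y,y')`, there is no involutive Lie algebra automorphism
`θ` for which `(v, w) ↦ B v (θ w)` is positive definite, and none for which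
`(v, w) ↦ -B v (θ w)` is positive definite. -/
theorem su2_prod_no_cartanInvolution :
    (¬ ∃ θ : (↥su2 × ↥su2) →ₗ⁅ℝ⁆ (↥su2 × ↥su2),
        (∀ v, θ (θ v) = v) ∧ ∀ v, v ≠ 0 → 0 < Bform v (θ v)) ∧
    ¬ ∃ θ : (↥su2 × ↥su2) →ₗ⁅ℝ⁆ (↥su2 × ↥su2),
        (∀ v, θ (θ v) = v) ∧ ∀ v, v ≠ 0 → 0 < -Bform v (θ v) := by
  exact su2_prod_no_cartanInvolution'
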